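/- Let k ≥ 2 and define F : ℂ³ → ℂ by F(x,y,z) = conj(x)·y·(x + z^k) (the mixed function f·ḡ with f = y·(x+z^k) and g = x). Then: (i) the singular set Sing F contains the two complex lines {x = z = 0} and {x = y = 0}, so F has nonisolated singularities; and (ii) 0 is an isolated critical value of F: there exists ε > 0 such that every point p with ‖p‖ < ε at which fderiv ℝ F p is not surjective satisfies F(p) = 0. (Claims of Section 5.1: F is polar weighted-homogeneous, hence by Theorem 5.2 it has isolated critical value and Milnor tube fibration.) -/

import Mathlib

open Complex Filter Function Metric

noncomputable section

/-- `ℂ³` with its Euclidean (Hermitian) norm. -/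
abbrev C3 := EuclideanSpace ℂ (Fin 3)

/-- The point `(a, b, c) ∈ ℂ³`. -/
def mk3 (a b c : ℂ) : C3 := WithLp.toLp 2 ![a, b, c]

private lemma diffH (k : ℕ) (q : C3) :
    DifferentiableAt ℝ (fun q : C3 => q 1 * (q 0 + (q 2) ^ k)) q := by
  have h1 : DifferentiableAt ℂ (fun q : C3 => q 1 * (q 0 + (q 2) ^ k)) q := by
    have p0 := (EuclideanSpace.proj (𝕜 := ℂ) (0 : Fin 3)).differentiableAt (x := q)
    have p1 := (EuclideanSpace.proj (𝕜 := ℂ) (1 : Fin 3)).differentiableAt (x := q)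
    have p2 := (EuclideanSpace.proj (𝕜 := ℂ) (2 : Fin 3)).differentiableAt (x := q)
    exact p1.mul (p0.add (p2.pow k))
  exact h1.restrictScalars ℝ

private lemma diffG (q : C3) :
    DifferentiableAt ℝ (fun q : C3 => (starRingEnd ℂ) (q 0)) q := by
  have p0 : DifferentiableAt ℝ (fun q : C3 => q 0) q :=
    ((EuclideanSpace.proj (𝕜 := ℂ) (0 : Fin 3)).differentiableAt (x := q)).restrictScalars ℝ
  exact (Complex.conjCLE.differentiableAt).comp q p0

private lemma diffF (k : ℕ) (F : C3 → ℂ)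
    (hF : ∀ q : C3, F q = starRingEnd ℂ (q 0) * (q 1 * (q 0 + (q 2) ^ k))) (q : C3) :
    DifferentiableAt ℝ F q := by
  have : F = fun q : C3 => (starRingEnd ℂ) (q 0) * (q 1 * (q 0 + (q 2) ^ k)) := funext hF
  rw [this]
  exact (diffG q).mul (diffH k q)

/-- If the "holomorphic factors" vanish at `p`, the full real derivative vanishes. -/
private lemma notSurj (k : ℕ) (F : C3 → ℂ)
    (hF : ∀ q : C3, F q = starRingEnd ℂ (q 0) * (q 1 * (q 0 + (q 2) ^ k)))
    (p : C3) (hp0 : p 0 = 0) (hpH : p 1 * (p 0 + (p 2) ^ k) = 0) :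
    ¬ Surjective ⇑(fderiv ℝ F p) := by
  have hFe : F = fun q : C3 => (starRingEnd ℂ) (q 0) * (q 1 * (q 0 + (q 2) ^ k)) := funext hF
  have hG := (diffG p).hasFDerivAt
  have hH := (diffH k p).hasFDerivAt
  have hmul := hG.mul' hH
  have hfd : fderiv ℝ F p =
      (starRingEnd ℂ) (p 0) • fderiv ℝ (fun q : C3 => q 1 * (q 0 + (q 2) ^ k)) p +
        (fderiv ℝ (fun q : C3 => (starRingEnd ℂ) (q 0)) p).smulRight
          (p 1 * (p 0 + (p 2) ^ k)) := by
    rw [hFe]; exact hmul.fderiv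
  intro hs
  obtain ⟨v, hv⟩ := hs 1
  rw [hfd] at hv
  rw [hpH] at hv
  simp [hp0] at hv

/-- **Claims of Section 5.1.**  For `k ≥ 2`, the mixed function
`F(x,y,z) = conj(x)·y·(x + z^k)` (i.e. `f·ḡ` with `f = y·(x+z^k)`, `g = x`):
(i) has nonisolated singularities — `Sing F` contains the two complex lines
`{x = z = 0}` and `{x = y = 0}`; and
(ii) has `0` as an isolated critical value — on some ball around the origin all critical
points of `F` lie in `F⁻¹(0)`.
(`F` is polar weighted-homogeneous, hence Theorem 5.2 applies.) -/
theorem xbar_y_x_plus_zk_isolated_critical_value_nonisolated_sing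
    (k : ℕ) (hk : 2 ≤ k)
    (F : C3 → ℂ) (hF : ∀ q : C3, F q = starRingEnd ℂ (q 0) * (q 1 * (q 0 + (q 2) ^ k))) :
    (∀ y : ℂ, ¬ Surjective ⇑(fderiv ℝ F (mk3 0 y 0))) ∧
    (∀ z : ℂ, ¬ Surjective ⇑(fderiv ℝ F (mk3 0 0 z))) ∧
    (∃ ε > (0 : ℝ), ∀ q : C3, ‖q‖ < ε → ¬ Surjective ⇑(fderiv ℝ F q) → F q = 0) := by
  have hk0 : k ≠ 0 := by omega
  refine ⟨?_, ?_, ?_⟩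
  · intro y
    apply notSurj k F hF
    · simp [mk3]
    · simp [mk3, zero_pow hk0]
  · intro z
    apply notSurj k F hF
    · simp [mk3]
    · simp [mk3]
  · refine ⟨1, one_pos, fun q _ hns => ?_⟩
    by_contra hFq
    apply hns
    -- `F q ≠ 0`, so all factors are nonzero
    have hprod : (starRingEnd ℂ) (q 0) * (q 1 * (q 0 + (q 2) ^ k)) ≠ 0 := by
      rw [← hF q]; exact hFq
    have hx : (starRingEnd ℂ) (q 0) ≠ 0 := fun h => hprod (by rw [h, zero_mul])
    have hxz : q 0 + (q 2) ^ k ≠ 0 := fun h => hprod (by rw [h, mul_zero, mul_zero])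
    set c : ℂ := (starRingEnd ℂ) (q 0) * (q 0 + (q 2) ^ k) with hc
    have hcne : c ≠ 0 := mul_ne_zero hx hxz
    -- the direction e = (0,1,0)
    set e : C3 := EuclideanSpace.single (1 : Fin 3) (1 : ℂ) with he
    set A : ℂ → C3 := fun b => q + b • e with hA
    have hA' : HasFDerivAt A ((ContinuousLinearMap.id ℝ ℂ).smulRight e) 0 :=
      ((hasFDerivAt_id (0 : ℂ)).smul_const e).const_add q
    have hA0 : A 0 = q := by simp [hA]
    have hDF : HasFDerivAt F (fderiv ℝ F q) q := (diffF k F hF q).hasFDerivAt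
    have hDF0 : HasFDerivAt F (fderiv ℝ F q) (A 0) := by rw [hA0]; exact hDF
    have hchain := hDF0.comp (0 : ℂ) hA'
    -- direct computation of F ∘ A
    have hcomp : (F ∘ A) = fun b => F q + b * c := by
      funext b
      have hAi : ∀ i : Fin 3, A b i = q i + b * (EuclideanSpace.single (1 : Fin 3) (1 : ℂ)) i := by
        intro i; simp [hA, he]
      have h0 : A b 0 = q 0 := by rw [hAi 0]; simp [EuclideanSpace.single_apply]
      have h1 : A b 1 = q 1 + b := by rw [hAi 1]; simp [EuclideanSpace.single_apply]
      have h2 : A b 2 = q 2 := by rw [hAi 2]; simp [EuclideanSpace.single_apply]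
      simp only [Function.comp_apply, hF, h0, h1, h2, hc]
      ring
    have hdirect : HasFDerivAt (F ∘ A) ((ContinuousLinearMap.id ℝ ℂ).smulRight c) 0 := by
      rw [hcomp]
      exact (((hasFDerivAt_id (0 : ℂ)).mul_const' c).const_add (F q))
    have huniq := hchain.unique hdirect
    intro w
    refine ⟨(w / c) • e, ?_⟩
    have := congrArg (fun (L : ℂ →L[ℝ] ℂ) => L (w / c)) huniq
    simp only [ContinuousLinearMap.comp_apply, ContinuousLinearMap.smulRight_apply,
      ContinuousLinearMap.id_apply] at this
    rw [this, smul_eq_mul]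
    field_simp
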